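/- Fix an arbitrary infinite reference strand R over {A,C,G,T} containing infinitely many occurrences of each character, and let S be drawn uniformly from strings in {A,C,G,T}^n with no two consecutive equal characters. Then cost_R(S) stochastically dominates the sum of n i.i.d. random variables each uniform on {1,2,3}; in particular E[cost_R(S)] ≥ 2n. -/

import Mathlib

open Finset
open scoped Classical

noncomputable def refCost (R : ℕ → Fin 4) (S : List (Fin 4)) : ℕ :=
  sInf {m | S.Sublist ((List.range m).map R)}

/-- Strands of length n over {A,C,G,T} with no two consecutive equal characters. -/
def NoHomo (n : ℕ) : Type :=
  {S : Fin n → Fin 4 // List.Chain' (· ≠ ·) (List.ofFn S)}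

noncomputable instance (n : ℕ) : Fintype (NoHomo n) := by
  unfold NoHomo; infer_instance

section Aux

variable (R : ℕ → Fin 4)

/-- first position `≥ p` where `R` equals `c`. -/
noncomputable def nxt (c : Fin 4) (p : ℕ) : ℕ := sInf {q | p ≤ q ∧ R q = c}

variable {R}

lemma nxt_set_nonempty (hR : ∀ c : Fin 4, {i : ℕ | R i = c}.Infinite) (c : Fin 4) (p : ℕ) : {q | p ≤ q ∧ R q = c}.Nonempty := by
  obtain ⟨q, hq, hpq⟩ := (hR c).exists_gt p
  exact ⟨q, le_of_lt hpq, hq⟩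

lemma nxt_mem (hR : ∀ c : Fin 4, {i : ℕ | R i = c}.Infinite) (c : Fin 4) (p : ℕ) : p ≤ nxt R c p ∧ R (nxt R c p) = c :=
  Nat.sInf_mem (nxt_set_nonempty hR c p)

lemma le_nxt (hR : ∀ c : Fin 4, {i : ℕ | R i = c}.Infinite) (c : Fin 4) (p : ℕ) : p ≤ nxt R c p := (nxt_mem hR c p).1

lemma R_nxt (hR : ∀ c : Fin 4, {i : ℕ | R i = c}.Infinite) (c : Fin 4) (p : ℕ) : R (nxt R c p) = c := (nxt_mem hR c p).2

lemma nxt_min {c : Fin 4} {p q : ℕ} (h1 : p ≤ q) (h2 : R q = c) : nxt R c p ≤ q :=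
  Nat.sInf_le ⟨h1, h2⟩

variable (R) in
/-- final greedy position (exclusive) after printing `L` starting search at `p`. -/
noncomputable def gpos : List (Fin 4) → ℕ → ℕ
  | [], p => p
  | c :: L, p => gpos L (nxt R c p + 1)

@[simp] lemma gpos_nil (p : ℕ) : gpos R [] p = p := rfl
@[simp] lemma gpos_cons (c : Fin 4) (L : List (Fin 4)) (p : ℕ) :
    gpos R (c :: L) p = gpos R L (nxt R c p + 1) := rfl

lemma le_gpos (hR : ∀ c : Fin 4, {i : ℕ | R i = c}.Infinite) : ∀ (L : List (Fin 4)) (p : ℕ), p ≤ gpos R L p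
  | [], p => le_rfl
  | c :: L, p => le_trans (Nat.le_succ_of_le (le_nxt hR c p)) (le_gpos hR L _)

lemma gpos_achieve (hR : ∀ c : Fin 4, {i : ℕ | R i = c}.Infinite) : ∀ (L : List (Fin 4)) (p : ℕ),
    L.Sublist ((List.range' p (gpos R L p - p)).map R)
  | [], p => by simp
  | c :: L, p => by
    set q := nxt R c p with hq
    have hpq : p ≤ q := le_nxt hR c p
    have hqg : q + 1 ≤ gpos R L (q + 1) := le_gpos hR L (q + 1)
    have hsplit : List.range' p (gpos R (c :: L) p - p)
        = List.range' p (q - p) ++ q :: List.range' (q + 1) (gpos R L (q+1) - (q+1)) := by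
      have h1 : List.range' q (gpos R L (q+1) - q) = q :: List.range' (q+1) (gpos R L (q+1) - (q+1)) := by
        have h : gpos R L (q+1) - q = (gpos R L (q+1) - (q+1)) + 1 := by omega
        rw [h, List.range'_succ]
      have h2 : p + (q - p) = q := by omega
      have h3 := List.range'_append_1 (s := p) (m := q - p) (n := gpos R L (q+1) - q)
      rw [h2] at h3
      rw [gpos_cons, ← hq]
      have h4 : gpos R L (q+1) - p = q - p + (gpos R L (q+1) - q) := by omega
      rw [h4, ← h3, h1]
    rw [hsplit, List.map_append]
    have htail : (c :: L).Sublist (List.map R (q :: List.range' (q + 1) (gpos R L (q+1) - (q+1)))) := by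
      rw [List.map_cons, R_nxt hR]
      exact (gpos_achieve hR L (q+1)).cons₂ c
    exact htail.trans (List.sublist_append_right _ _)


lemma nxt_mono (hR : ∀ c : Fin 4, {i : ℕ | R i = c}.Infinite) (c : Fin 4) {p p' : ℕ} (h : p ≤ p') :
    nxt R c p ≤ nxt R c p' :=
  nxt_min (le_trans h (le_nxt hR c p')) (R_nxt hR c p')

lemma gpos_mono (hR : ∀ c : Fin 4, {i : ℕ | R i = c}.Infinite) :
    ∀ (L : List (Fin 4)) {p p' : ℕ}, p ≤ p' → gpos R L p ≤ gpos R L p'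
  | [], p, p', h => h
  | c :: L, p, p', h => by
    simpa using gpos_mono hR L (Nat.succ_le_succ (nxt_mono hR c h))

lemma gpos_min (hR : ∀ c : Fin 4, {i : ℕ | R i = c}.Infinite) :
    ∀ (L : List (Fin 4)) (p k : ℕ), L.Sublist ((List.range' p k).map R) → gpos R L p ≤ p + k
  | [], p, k, _ => Nat.le_add_right p k
  | c :: L, p, 0, h => by simp at h
  | c :: L, p, k + 1, h => by
    rw [List.range'_succ, List.map_cons] at h
    cases h with
    | cons _ h' =>
      calc gpos R (c :: L) p ≤ gpos R (c :: L) (p + 1) := gpos_mono hR _ (Nat.le_succ p)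
        _ ≤ (p + 1) + k := gpos_min hR (c :: L) (p + 1) k h'
        _ = p + (k + 1) := by omega
    | cons_cons _ h' =>
      have hc : nxt R (R p) p = p := le_antisymm (nxt_min le_rfl rfl) (le_nxt hR _ p)
      rw [gpos_cons, hc]
      calc gpos R L (p + 1) ≤ (p + 1) + k := gpos_min hR L (p + 1) k h'
        _ = p + (k + 1) := by omega

lemma gpos_le_refCost (hR : ∀ c : Fin 4, {i : ℕ | R i = c}.Infinite) (L : List (Fin 4)) :
    gpos R L 0 ≤ refCost R L := by
  have hne : {m | L.Sublist ((List.range m).map R)}.Nonempty := by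
    refine ⟨gpos R L 0, ?_⟩
    have := gpos_achieve hR L 0
    simpa [List.range_eq_range'] using this
  have hmem : L.Sublist ((List.range (refCost R L)).map R) := Nat.sInf_mem hne
  rw [List.range_eq_range'] at hmem
  simpa using gpos_min hR L 0 (refCost R L) hmem

end Aux

lemma sorted_sum_le {ι : Type*} [Fintype ι] (d : ι → ℕ) (hinj : Function.Injective d)
    (h1 : ∀ c, 1 ≤ d c) (g : ℕ → ℕ) (hg : Monotone g) :
    ∑ j ∈ Finset.Icc 1 (Fintype.card ι), g j ≤ ∑ c, g (d c) := by
  classical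
  set m := Fintype.card ι with hm
  set rank : ι → ℕ := fun c => (univ.filter (fun c' => d c' ≤ d c)).card with hrank
  have hrle : ∀ c, rank c ≤ d c := by
    intro c
    have h := Finset.card_le_card_of_injOn
      (f := d) (s := univ.filter (fun c' => d c' ≤ d c)) (t := Finset.Icc 1 (d c))
      (by intro x hx; simp only [Finset.mem_coe, Finset.mem_filter, Finset.mem_univ, true_and] at hx
          simp only [Finset.mem_coe, Finset.mem_Icc]; exact ⟨h1 x, hx⟩)
      (fun x _ y _ h => hinj h)
    simpa [Nat.card_Icc] using h
  have hmono : ∀ {a b : ι}, d a < d b → rank a < rank b := by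
    intro a b hab
    apply Finset.card_lt_card
    constructor
    · exact Finset.filter_subset_filter _ (by intro x hx; exact hx) |>.trans
        (by intro x hx; simp only [Finset.mem_filter, Finset.mem_univ, true_and] at hx ⊢; omega)
    · intro hsub
      have hb : b ∈ univ.filter (fun c' => d c' ≤ d b) := by simp
      have := hsub hb
      simp only [Finset.mem_filter, Finset.mem_univ, true_and] at this
      omega
  have hrinj : Function.Injective rank := by
    intro a b hab
    by_contra hne
    have hdne : d a ≠ d b := fun h => hne (hinj h)
    rcases lt_or_gt_of_ne hdne with h | h
    · exact absurd hab (Nat.ne_of_lt (hmono h))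
    · exact absurd hab.symm (Nat.ne_of_lt (hmono h))
  have hr1 : ∀ c, 1 ≤ rank c := by
    intro c
    have : c ∈ univ.filter (fun c' => d c' ≤ d c) := by simp
    exact Finset.card_pos.mpr ⟨c, this⟩
  have hrm : ∀ c, rank c ≤ m := fun c => by
    simpa [hm] using Finset.card_filter_le univ (fun c' => d c' ≤ d c)
  have himg : univ.image rank = Finset.Icc 1 m := by
    apply Finset.eq_of_subset_of_card_le
    · intro j hj
      simp only [Finset.mem_image] at hj
      obtain ⟨c, _, rfl⟩ := hj
      simp [Finset.mem_Icc, hr1 c, hrm c]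
    · rw [Finset.card_image_of_injective _ hrinj, Finset.card_univ, Nat.card_Icc]
      omega
  calc ∑ j ∈ Finset.Icc 1 m, g j = ∑ j ∈ univ.image rank, g j := by rw [himg]
    _ = ∑ c, g (rank c) := Finset.sum_image (fun a _ b _ h => hrinj h)
    _ ≤ ∑ c, g (d c) := Finset.sum_le_sum fun c _ => hg (hrle c)

lemma sum_pi_succ {α M : Type*} [Fintype α] [AddCommMonoid M] {k : ℕ} (F : (Fin (k+1) → α) → M) :
    ∑ g : Fin (k+1) → α, F g = ∑ a : α, ∑ f : Fin k → α, F (Fin.cons a f) := by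
  classical
  calc ∑ g : Fin (k+1) → α, F g
      = ∑ p : α × (Fin k → α), F (Fin.cons p.1 p.2) :=
        (Fintype.sum_equiv (Fin.consEquiv fun _ => α) _ _ (fun p => rfl)).symm
    _ = ∑ a : α, ∑ f : Fin k → α, F (Fin.cons a f) := Fintype.sum_prod_type _

def consSigmaEquiv {α : Type*} {k : ℕ} (P : (Fin (k+1) → α) → Prop) :
    {g : Fin (k+1) → α // P g} ≃ Σ a : α, {f : Fin k → α // P (Fin.cons a f)} where
  toFun g := ⟨g.1 0, Fin.tail g.1, by
    have h := g.2
    rwa [← Fin.cons_self_tail g.1] at h⟩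
  invFun x := ⟨Fin.cons x.1 x.2.1, x.2.2⟩
  left_inv g := Subtype.ext (Fin.cons_self_tail g.1)
  right_inv x := by
    rcases x with ⟨a, f, h⟩
    rfl

lemma card_filter_pi_succ {α : Type*} [Fintype α] {k : ℕ} (P : (Fin (k+1) → α) → Prop)
    [DecidablePred P] [∀ a : α, DecidablePred (fun f : Fin k → α => P (Fin.cons a f))] :
    (univ.filter P).card = ∑ a : α, (univ.filter fun f : Fin k → α => P (Fin.cons a f)).card := by
  classical
  rw [← Fintype.card_subtype, Fintype.card_congr (consSigmaEquiv P), Fintype.card_sigma]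
  refine Finset.sum_congr rfl fun a _ => ?_
  rw [Fintype.card_subtype]

lemma ofFn_cons' {α : Type*} {k : ℕ} (a : α) (f : Fin k → α) :
    List.ofFn (Fin.cons a f) = a :: List.ofFn f := by
  rw [List.ofFn_succ]
  simp

lemma chain'_cons_iff {α : Type*} {r : α → α → Prop} {a : α} {l : List α} :
    List.Chain' r (a :: l) ↔ List.Chain r a l := Iff.rfl

lemma chain_cons_iff' {α : Type*} {r : α → α → Prop} {a b : α} {l : List α} :
    List.Chain r a (b :: l) ↔ r a b ∧ List.Chain r b l := List.isChain_cons_cons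

noncomputable def Acnt (k t : ℕ) : ℕ :=
  (Finset.univ.filter (fun y : Fin k → Fin 3 => t ≤ ∑ i, ((y i : ℕ) + 1))).card

noncomputable def Bcnt (R : ℕ → Fin 4) (k t p : ℕ) (prev : Fin 4) : ℕ :=
  (Finset.univ.filter (fun S : Fin k → Fin 4 =>
    List.Chain (· ≠ ·) prev (List.ofFn S) ∧ p + t ≤ gpos R (List.ofFn S) p)).card

lemma Acnt_anti (k : ℕ) {t t' : ℕ} (h : t ≤ t') : Acnt k t' ≤ Acnt k t := by
  apply Finset.card_le_card
  intro y hy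
  simp only [Finset.mem_filter, Finset.mem_univ, true_and] at *
  omega

lemma Acnt_zero (t : ℕ) : Acnt 0 t = if t = 0 then 1 else 0 := by
  unfold Acnt
  rcases Nat.eq_zero_or_pos t with rfl | ht
  · simp
  · rw [if_neg (by omega), Finset.card_eq_zero, Finset.filter_eq_empty_iff]
    intro y _
    simp only [Finset.sum_empty, Fin.sum_univ_zero]
    omega

lemma Bcnt_zero (R : ℕ → Fin 4) (t p : ℕ) (prev : Fin 4) :
    Bcnt R 0 t p prev = if t = 0 then 1 else 0 := by
  unfold Bcnt
  have hiff : ∀ S : Fin 0 → Fin 4,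
      (List.Chain (· ≠ ·) prev (List.ofFn S) ∧ p + t ≤ gpos R (List.ofFn S) p) ↔ t = 0 := by
    intro S
    rw [List.ofFn_zero]
    constructor
    · rintro ⟨-, h⟩; simp only [gpos_nil] at h; omega
    · rintro rfl; exact ⟨List.Chain.nil, by simp⟩
  rw [Finset.filter_congr (fun S _ => hiff S)]
  rcases Nat.eq_zero_or_pos t with rfl | ht
  · simp
  · rw [if_neg (by omega)]
    rw [Finset.filter_false_of_mem (fun _ _ => by omega), Finset.card_empty]

lemma Acnt_succ (k t : ℕ) : Acnt (k+1) t = ∑ v : Fin 3, Acnt k (t - ((v : ℕ) + 1)) := by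
  unfold Acnt
  rw [card_filter_pi_succ]
  refine Finset.sum_congr rfl fun v _ => ?_
  congr 1
  apply Finset.filter_congr
  intro f _
  have hsum : ∑ i : Fin (k+1), (((Fin.cons v f : Fin (k+1) → Fin 3) i : ℕ) + 1)
      = ((v : ℕ) + 1) + ∑ i : Fin k, ((f i : ℕ) + 1) := by
    rw [Fin.sum_univ_succ]
    simp
  rw [hsum]
  constructor <;> intro h <;> omega

lemma Bcnt_succ (R : ℕ → Fin 4) (hR : ∀ c : Fin 4, {i : ℕ | R i = c}.Infinite)
    (k t p : ℕ) (prev : Fin 4) :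
    Bcnt R (k+1) t p prev
      = ∑ c : Fin 4, if prev ≠ c
          then Bcnt R k (t - (nxt R c p + 1 - p)) (nxt R c p + 1) c else 0 := by
  unfold Bcnt
  rw [card_filter_pi_succ]
  refine Finset.sum_congr rfl fun c _ => ?_
  by_cases hc : prev = c
  · rw [if_neg (by simpa using hc)]
    rw [Finset.card_eq_zero, Finset.filter_eq_empty_iff]
    intro f _
    rw [ofFn_cons']
    rintro ⟨hch, -⟩
    rw [chain_cons_iff'] at hch
    exact hch.1 hc
  · rw [if_pos hc]
    congr 1
    apply Finset.filter_congr
    intro f _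
    rw [ofFn_cons', chain_cons_iff', gpos_cons]
    have hpq : p ≤ nxt R c p := le_nxt hR c p
    have hqg : nxt R c p + 1 ≤ gpos R (List.ofFn f) (nxt R c p + 1) := le_gpos hR _ _
    constructor
    · rintro ⟨⟨-, h2⟩, h3⟩
      exact ⟨h2, by omega⟩
    · rintro ⟨h2, h3⟩
      exact ⟨⟨hc, h2⟩, by omega⟩

lemma Icc_sum_three (g : ℕ → ℕ) : ∑ j ∈ Finset.Icc 1 3, g j = g 1 + g 2 + g 3 := by
  have h : Finset.Icc 1 3 = {1, 2, 3} := by decide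
  rw [h, Finset.sum_insert (by decide), Finset.sum_insert (by decide), Finset.sum_singleton,
    add_assoc]

lemma Icc_sum_four (g : ℕ → ℕ) : ∑ j ∈ Finset.Icc 1 4, g j = g 1 + g 2 + g 3 + g 4 := by
  have h : Finset.Icc 1 4 = {1, 2, 3, 4} := by decide
  rw [h, Finset.sum_insert (by decide), Finset.sum_insert (by decide),
    Finset.sum_insert (by decide), Finset.sum_singleton]
  omega

lemma card_ne_three (prev : Fin 4) : Fintype.card {c : Fin 4 // prev ≠ c} = 3 := by
  rw [Fintype.card_subtype_compl (p := fun c => prev = c)]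
  rw [Fintype.card_subtype_eq' prev]
  simp

lemma Acnt_le_Bcnt (R : ℕ → Fin 4) (hR : ∀ c : Fin 4, {i : ℕ | R i = c}.Infinite) :
    ∀ (k t p : ℕ) (prev : Fin 4), Acnt k t ≤ Bcnt R k t p prev := by
  intro k
  induction k with
  | zero => intro t p prev; rw [Acnt_zero, Bcnt_zero]
  | succ k ih =>
    intro t p prev
    rw [Acnt_succ, Bcnt_succ R hR]
    have hinj : Function.Injective (fun c : {c : Fin 4 // prev ≠ c} => nxt R c.1 p + 1 - p) := by
      intro a b hab
      simp only at hab
      have ha := le_nxt hR a.1 p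
      have hb := le_nxt hR b.1 p
      have hn : nxt R a.1 p = nxt R b.1 p := by omega
      apply Subtype.ext
      rw [← R_nxt hR a.1 p, ← R_nxt hR b.1 p, hn]
    have h1 : ∀ c : {c : Fin 4 // prev ≠ c}, 1 ≤ nxt R c.1 p + 1 - p := by
      intro c
      have := le_nxt hR c.1 p
      omega
    have hmono : Monotone (fun j => Acnt k (t - j)) := by
      intro j j' hj
      exact Acnt_anti k (by omega)
    have hsorted := sorted_sum_le (fun c : {c : Fin 4 // prev ≠ c} => nxt R c.1 p + 1 - p)
      hinj h1 (fun j => Acnt k (t - j)) hmono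
    rw [card_ne_three] at hsorted
    have hsub : ∀ x : Fin 4, x ∈ univ.filter (fun c => prev ≠ c) ↔ prev ≠ x := by
      intro x; simp
    calc ∑ v : Fin 3, Acnt k (t - ((v : ℕ) + 1))
        = ∑ j ∈ Finset.Icc 1 3, Acnt k (t - j) := by
          rw [Icc_sum_three, Fin.sum_univ_three]
          norm_num
      _ ≤ ∑ c : {c : Fin 4 // prev ≠ c}, Acnt k (t - (nxt R c.1 p + 1 - p)) := hsorted
      _ ≤ ∑ c : {c : Fin 4 // prev ≠ c},
            Bcnt R k (t - (nxt R c.1 p + 1 - p)) (nxt R c.1 p + 1) c.1 :=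
          Finset.sum_le_sum fun c _ => ih _ _ _
      _ = ∑ c ∈ univ.filter (fun c : Fin 4 => prev ≠ c),
            Bcnt R k (t - (nxt R c p + 1 - p)) (nxt R c p + 1) c :=
          (Finset.sum_subtype _ hsub (fun c => Bcnt R k (t - (nxt R c p + 1 - p)) (nxt R c p + 1) c)).symm
      _ = ∑ c : Fin 4, if prev ≠ c
            then Bcnt R k (t - (nxt R c p + 1 - p)) (nxt R c p + 1) c else 0 :=
          Finset.sum_filter _ _

lemma chain_count : ∀ (k : ℕ) (c : Fin 4),
    (univ.filter (fun f : Fin k → Fin 4 => List.Chain (· ≠ ·) c (List.ofFn f))).card = 3 ^ k := by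
  intro k
  induction k with
  | zero =>
    intro c
    rw [pow_zero]
    rw [Finset.filter_true_of_mem (fun f _ => by rw [List.ofFn_zero]; exact List.Chain.nil)]
    simp
  | succ k ih =>
    intro c
    rw [card_filter_pi_succ]
    have hval : ∀ d : Fin 4,
        (univ.filter (fun f : Fin k → Fin 4 =>
          List.Chain (· ≠ ·) c (List.ofFn (Fin.cons d f)))).card
        = if c ≠ d then 3 ^ k else 0 := by
      intro d
      by_cases hcd : c = d
      · rw [if_neg (by simpa using hcd), Finset.card_eq_zero, Finset.filter_eq_empty_iff]
        intro f _
        rw [ofFn_cons', chain_cons_iff']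
        rintro ⟨h1, -⟩
        exact h1 hcd
      · rw [if_pos hcd, ← ih d]
        congr 1
        apply Finset.filter_congr
        intro f _
        rw [ofFn_cons', chain_cons_iff']
        exact ⟨fun h => h.2, fun h => ⟨hcd, h⟩⟩
    rw [Finset.sum_congr rfl (fun d _ => hval d), Finset.sum_ite, Finset.sum_const,
      Finset.sum_const, smul_eq_mul, smul_eq_mul, mul_zero, add_zero]
    have : (univ.filter (fun d : Fin 4 => c ≠ d)).card = 3 := by
      rw [Finset.filter_ne, Finset.card_erase_of_mem (Finset.mem_univ c)]
      simp
    rw [this]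
    ring

lemma noHomo_filter_card (n : ℕ) (Q : (Fin n → Fin 4) → Prop)
    (P : NoHomo n → Prop) [DecidablePred P] (hPQ : ∀ S : NoHomo n, P S ↔ Q S.1) :
    (univ.filter P).card
      = (univ.filter (fun f : Fin n → Fin 4 =>
          List.Chain' (· ≠ ·) (List.ofFn f) ∧ Q f)).card := by
  apply Finset.card_bij (fun (S : NoHomo n) _ => S.1)
  · intro S hS
    simp only [Finset.mem_filter, Finset.mem_univ, true_and] at hS ⊢
    exact ⟨S.2, (hPQ S).mp hS⟩
  · intro S _ T _ h
    exact Subtype.ext h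
  · intro f hf
    simp only [Finset.mem_filter, Finset.mem_univ, true_and] at hf
    exact ⟨(⟨f, hf.1⟩ : NoHomo n), Finset.mem_filter.mpr ⟨Finset.mem_univ _, (hPQ ⟨f, hf.1⟩).mpr hf.2⟩, rfl⟩

lemma noHomo_card (n : ℕ) :
    Fintype.card (NoHomo n)
      = (univ.filter (fun f : Fin n → Fin 4 => List.Chain' (· ≠ ·) (List.ofFn f))).card := by
  have h := noHomo_filter_card n (fun _ => True) (fun _ => True) (fun _ => Iff.rfl)
  simpa using h

lemma noHomo_card_succ (k : ℕ) : Fintype.card (NoHomo (k+1)) = 4 * 3 ^ k := by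
  rw [noHomo_card, card_filter_pi_succ]
  have hval : ∀ c : Fin 4,
      (univ.filter (fun f : Fin k → Fin 4 =>
        List.Chain' (· ≠ ·) (List.ofFn (Fin.cons c f)))).card = 3 ^ k := by
    intro c
    rw [← chain_count k c]
    congr 1
    apply Finset.filter_congr
    intro f _
    rw [ofFn_cons', chain'_cons_iff]
  rw [Finset.sum_congr rfl (fun c _ => hval c), Finset.sum_const, Finset.card_univ]
  simp [mul_comm]

lemma layer_core {ι : Type*} [Fintype ι] (f : ι → ℕ) (T : ℕ) :
    ∑ t ∈ Finset.range T, (univ.filter (fun x => t + 1 ≤ f x)).card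
      = ∑ x : ι, min T (f x) := by
  classical
  have h1 : ∀ t, (univ.filter (fun x => t + 1 ≤ f x)).card
      = ∑ x : ι, if t + 1 ≤ f x then 1 else 0 := fun t => Finset.card_filter _ _
  rw [Finset.sum_congr rfl (fun t _ => h1 t), Finset.sum_comm]
  refine Finset.sum_congr rfl fun x _ => ?_
  have h2 : (Finset.range T).filter (fun t => t + 1 ≤ f x) = Finset.range (min T (f x)) := by
    ext t
    simp only [Finset.mem_filter, Finset.mem_range, Finset.mem_range]
    omega
  calc ∑ t ∈ Finset.range T, (if t + 1 ≤ f x then 1 else 0)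
      = ((Finset.range T).filter (fun t => t + 1 ≤ f x)).card := (Finset.card_filter _ _).symm
    _ = min T (f x) := by rw [h2, Finset.card_range]

lemma layer_le {ι : Type*} [Fintype ι] (f : ι → ℕ) (T : ℕ) :
    ∑ t ∈ Finset.range T, (univ.filter (fun x => t + 1 ≤ f x)).card ≤ ∑ x : ι, f x := by
  rw [layer_core]
  exact Finset.sum_le_sum fun x _ => Nat.min_le_right _ _

lemma layer_eq {ι : Type*} [Fintype ι] (f : ι → ℕ) (T : ℕ) (hT : ∀ x, f x ≤ T) :
    ∑ t ∈ Finset.range T, (univ.filter (fun x => t + 1 ≤ f x)).card = ∑ x : ι, f x := by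
  rw [layer_core]
  exact Finset.sum_congr rfl fun x _ => Nat.min_eq_right (hT x)

lemma total_sum (n : ℕ) :
    ∑ y : Fin n → Fin 3, ∑ i, ((y i : ℕ) + 1) = 2 * n * 3 ^ n := by
  induction n with
  | zero => simp
  | succ k ih =>
    rw [sum_pi_succ (fun y : Fin (k+1) → Fin 3 => ∑ i, ((y i : ℕ) + 1))]
    have hsum : ∀ (v : Fin 3) (f : Fin k → Fin 3),
        ∑ i : Fin (k+1), (((Fin.cons v f : Fin (k+1) → Fin 3) i : ℕ) + 1)
          = ((v : ℕ) + 1) + ∑ i : Fin k, ((f i : ℕ) + 1) := by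
      intro v f
      rw [Fin.sum_univ_succ]
      simp
    have hcard : Fintype.card (Fin k → Fin 3) = 3 ^ k := by
      simp [Fintype.card_fun]
    calc ∑ v : Fin 3, ∑ f : Fin k → Fin 3,
          ∑ i : Fin (k+1), (((Fin.cons v f : Fin (k+1) → Fin 3) i : ℕ) + 1)
        = ∑ v : Fin 3, (3 ^ k * ((v : ℕ) + 1) + 2 * k * 3 ^ k) := by
          refine Finset.sum_congr rfl fun v _ => ?_
          rw [Finset.sum_congr rfl fun f _ => hsum v f, Finset.sum_add_distrib, ih,
            Finset.sum_const, Finset.card_univ, hcard, smul_eq_mul]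
      _ = 2 * (k + 1) * 3 ^ (k + 1) := by
          rw [Fin.sum_univ_three]
          simp only [Fin.val_zero, Fin.val_one, Fin.val_two]
          ring

lemma top_decomp (R : ℕ → Fin 4) (hR : ∀ c : Fin 4, {i : ℕ | R i = c}.Infinite) (k t : ℕ) :
    (univ.filter (fun f : Fin (k+1) → Fin 4 =>
        List.Chain' (· ≠ ·) (List.ofFn f) ∧ t ≤ gpos R (List.ofFn f) 0)).card
      = ∑ c : Fin 4, Bcnt R k (t - (nxt R c 0 + 1)) (nxt R c 0 + 1) c := by
  rw [card_filter_pi_succ]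
  refine Finset.sum_congr rfl fun c _ => ?_
  unfold Bcnt
  congr 1
  apply Finset.filter_congr
  intro f _
  rw [ofFn_cons', chain'_cons_iff, gpos_cons]
  have hg := le_gpos hR (List.ofFn f) (nxt R c 0 + 1)
  constructor
  · rintro ⟨h1, h2⟩; exact ⟨h1, by omega⟩
  · rintro ⟨h1, h2⟩; exact ⟨h1, by omega⟩

lemma top_ge (R : ℕ → Fin 4) (hR : ∀ c : Fin 4, {i : ℕ | R i = c}.Infinite) (k t : ℕ) :
    Acnt k (t-1) + Acnt k (t-2) + Acnt k (t-3) + Acnt k (t-4)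
      ≤ ∑ c : Fin 4, Bcnt R k (t - (nxt R c 0 + 1)) (nxt R c 0 + 1) c := by
  have hinj : Function.Injective (fun c : Fin 4 => nxt R c 0 + 1) := by
    intro a b hab
    simp only [Nat.add_right_cancel_iff] at hab
    rw [← R_nxt hR a 0, ← R_nxt hR b 0, hab]
  have hmono : Monotone (fun j => Acnt k (t - j)) := by
    intro j j' hj
    exact Acnt_anti k (by omega)
  have hsorted := sorted_sum_le (fun c : Fin 4 => nxt R c 0 + 1) hinj
    (fun c => Nat.succ_le_succ (Nat.zero_le _)) (fun j => Acnt k (t - j)) hmono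
  rw [Fintype.card_fin, Icc_sum_four] at hsorted
  exact le_trans hsorted (Finset.sum_le_sum fun c _ => Acnt_le_Bcnt R hR k _ _ c)

lemma arith34 (A1 A2 A3 A4 X : ℕ) (h1 : A1 ≤ A4) (h2 : A2 ≤ A4) (h3 : A3 ≤ A4)
    (hX : A1 + A2 + A3 + A4 ≤ X) : (A1 + A2 + A3) * 4 ≤ X * 3 := by omega

/-- For any infinite reference strand R containing each character infinitely
often, the cost of a uniformly random strand without homopolymers
stochastically dominates a sum of n i.i.d. uniforms on {1,2,3} (expressed by
cross-multiplied counts over the two uniform sample spaces), and in particular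
E[cost] ≥ 2n. -/
theorem stmt11 (n : ℕ) (R : ℕ → Fin 4) (hR : ∀ c : Fin 4, {i : ℕ | R i = c}.Infinite) :
    (∀ t : ℕ,
      (Finset.univ.filter
        (fun y : Fin n → Fin 3 => t ≤ ∑ i, ((y i : ℕ) + 1))).card
          * Fintype.card (NoHomo n)
      ≤ (Finset.univ.filter
        (fun S : NoHomo n => t ≤ refCost R (List.ofFn S.1))).card * 3 ^ n) ∧
    2 * n * Fintype.card (NoHomo n) ≤ ∑ S : NoHomo n, refCost R (List.ofFn S.1) := by
  have hpart1 : ∀ t : ℕ,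
      (Finset.univ.filter
        (fun y : Fin n → Fin 3 => t ≤ ∑ i, ((y i : ℕ) + 1))).card
          * Fintype.card (NoHomo n)
      ≤ (Finset.univ.filter
        (fun S : NoHomo n => t ≤ refCost R (List.ofFn S.1))).card * 3 ^ n := by
    intro t
    cases n with
    | zero =>
      have hC : Fintype.card (NoHomo 0) = 1 := by
        rw [noHomo_card, Finset.filter_true_of_mem (fun f _ => by
          rw [List.ofFn_zero]; exact List.IsChain.nil)]
        simp
      have hA : (Finset.univ.filter
          (fun y : Fin 0 → Fin 3 => t ≤ ∑ i, ((y i : ℕ) + 1))).card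
            = if t = 0 then 1 else 0 := Acnt_zero t
      rcases Nat.eq_zero_or_pos t with rfl | ht
      · rw [hA, if_pos rfl,
          Finset.filter_true_of_mem (fun S _ => Nat.zero_le _), Finset.card_univ, hC]
        norm_num
      · rw [hA, if_neg (Nat.pos_iff_ne_zero.mp ht)]
        simp
    | succ k =>
      have hRC : (univ.filter (fun f : Fin (k+1) → Fin 4 =>
            List.Chain' (· ≠ ·) (List.ofFn f) ∧ t ≤ gpos R (List.ofFn f) 0)).card
          ≤ (Finset.univ.filter
            (fun S : NoHomo (k+1) => t ≤ refCost R (List.ofFn S.1))).card := by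
        refine le_of_le_of_eq ?_
          (noHomo_filter_card (k+1) (fun f => t ≤ refCost R (List.ofFn f))
            (fun S => t ≤ refCost R (List.ofFn S.1)) (fun S => Iff.rfl)).symm
        apply Finset.card_le_card
        intro f hf
        simp only [Finset.mem_filter, Finset.mem_univ, true_and] at hf ⊢
        exact ⟨hf.1, le_trans hf.2 (gpos_le_refCost hR _)⟩
      have hkey : Acnt k (t-1) + Acnt k (t-2) + Acnt k (t-3) + Acnt k (t-4)
          ≤ (Finset.univ.filter
            (fun S : NoHomo (k+1) => t ≤ refCost R (List.ofFn S.1))).card :=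
        le_trans (le_of_le_of_eq (top_ge R hR k t) (top_decomp R hR k t).symm) hRC
      have h14 : Acnt k (t-1) ≤ Acnt k (t-4) := Acnt_anti k (Nat.sub_le_sub_left (by norm_num) t)
      have h24 : Acnt k (t-2) ≤ Acnt k (t-4) := Acnt_anti k (Nat.sub_le_sub_left (by norm_num) t)
      have h34 : Acnt k (t-3) ≤ Acnt k (t-4) := Acnt_anti k (Nat.sub_le_sub_left (by norm_num) t)
      have hmul := arith34 _ _ _ _ _ h14 h24 h34 hkey
      have hA3 : (Finset.univ.filter
          (fun y : Fin (k+1) → Fin 3 => t ≤ ∑ i, ((y i : ℕ) + 1))).card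
            = Acnt k (t-1) + Acnt k (t-2) + Acnt k (t-3) := by
        show Acnt (k+1) t = _
        rw [Acnt_succ, Fin.sum_univ_three]
        norm_num
      rw [hA3, noHomo_card_succ]
      calc (Acnt k (t-1) + Acnt k (t-2) + Acnt k (t-3)) * (4 * 3 ^ k)
          = ((Acnt k (t-1) + Acnt k (t-2) + Acnt k (t-3)) * 4) * 3 ^ k := by ring
        _ ≤ ((Finset.univ.filter
            (fun S : NoHomo (k+1) => t ≤ refCost R (List.ofFn S.1))).card * 3) * 3 ^ k :=
            Nat.mul_le_mul_right _ hmul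
        _ = (Finset.univ.filter
            (fun S : NoHomo (k+1) => t ≤ refCost R (List.ofFn S.1))).card * 3 ^ (k+1) := by ring
  refine ⟨hpart1, ?_⟩
  have hb : ∀ y : Fin n → Fin 3, (∑ i, ((y i : ℕ) + 1)) ≤ 3 * n := by
    intro y
    calc ∑ i, ((y i : ℕ) + 1) ≤ ∑ _i : Fin n, 3 :=
          Finset.sum_le_sum (fun i _ => (y i).is_lt)
      _ = 3 * n := by simp [mul_comm]
  have hlayer : ∑ t ∈ Finset.range (3 * n), Acnt n (t+1) = 2 * n * 3 ^ n := by
    have h := layer_eq (fun y : Fin n → Fin 3 => ∑ i, ((y i : ℕ) + 1)) (3 * n) hb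
    rw [total_sum] at h
    exact h
  have hsum1 : (∑ t ∈ Finset.range (3 * n), Acnt n (t+1)) * Fintype.card (NoHomo n)
      ≤ (∑ t ∈ Finset.range (3 * n),
          (univ.filter (fun S : NoHomo n => t + 1 ≤ refCost R (List.ofFn S.1))).card) * 3 ^ n := by
    rw [Finset.sum_mul, Finset.sum_mul]
    exact Finset.sum_le_sum fun t _ => hpart1 (t+1)
  have hsum2 : ∑ t ∈ Finset.range (3 * n),
      (univ.filter (fun S : NoHomo n => t + 1 ≤ refCost R (List.ofFn S.1))).card
      ≤ ∑ S : NoHomo n, refCost R (List.ofFn S.1) :=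
    layer_le (fun S : NoHomo n => refCost R (List.ofFn S.1)) (3 * n)
  have h3 : 0 < 3 ^ n := pow_pos (by norm_num) n
  apply Nat.le_of_mul_le_mul_right ?_ h3
  calc 2 * n * Fintype.card (NoHomo n) * 3 ^ n
      = (2 * n * 3 ^ n) * Fintype.card (NoHomo n) := by ring
    _ = (∑ t ∈ Finset.range (3 * n), Acnt n (t+1)) * Fintype.card (NoHomo n) := by rw [hlayer]
    _ ≤ (∑ t ∈ Finset.range (3 * n),
          (univ.filter (fun S : NoHomo n => t + 1 ≤ refCost R (List.ofFn S.1))).card) * 3 ^ n := hsum1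
    _ ≤ (∑ S : NoHomo n, refCost R (List.ofFn S.1)) * 3 ^ n := Nat.mul_le_mul_right _ hsum2
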